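/- Let G be a cyclic group of even order n ≥ 4. Then there is no zero-sum sequence A over G with ρ(L(A)) = n/2 such that max L(A) − 1 ∈ L(A). -/

import Mathlib

def IsMinZS {G : Type*} [AddCommGroup G] (U : Multiset G) : Prop :=
  U ≠ 0 ∧ U.sum = 0 ∧ ∀ V ≤ U, V ≠ 0 → V.sum = 0 → V = U

noncomputable def DavC (G : Type*) [AddCommGroup G] : ℕ :=
  sSup {n | ∃ U : Multiset G, IsMinZS U ∧ U.card = n}

def LSet {G : Type*} [AddCommGroup G] (A : Multiset G) : Set ℕ :=
  {k | ∃ l : Multiset (Multiset G), l.card = k ∧ (∀ U ∈ l, IsMinZS U) ∧ l.sum = A}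

noncomputable def rhoSet (L : Set ℕ) : ℚ := ((sSup L : ℕ) : ℚ) / ((sInf L : ℕ) : ℚ)

def IsIntervalSet (L : Set ℕ) : Prop := L.Nonempty ∧ L = Set.Icc (sInf L) (sSup L)

/-! ### Auxiliary lemmas -/

section Aux

lemma my_card_sum {G : Type*} (F : Multiset (Multiset G)) :
    Multiset.card F.sum = (F.map Multiset.card).sum := by
  induction F using Multiset.induction with
  | empty => simp
  | cons a s ih => simp [ih]

lemma my_count_sum {G : Type*} [DecidableEq G] (x : G) (F : Multiset (Multiset G)) :
    F.sum.count x = (F.map (Multiset.count x)).sum := by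
  induction F using Multiset.induction with
  | empty => simp
  | cons a s ih => simp [ih]

lemma my_mem_le_sum {G : Type*} {F : Multiset (Multiset G)} {B : Multiset G} (h : B ∈ F) :
    B ≤ F.sum := by
  classical
  rw [← Multiset.cons_erase h, Multiset.sum_cons]
  exact Multiset.le_add_right _ _

lemma my_mem_sum {G : Type*} {F : Multiset (Multiset G)} {x : G} (h : x ∈ F.sum) :
    ∃ B ∈ F, x ∈ B := by
  induction F using Multiset.induction with
  | empty => simp at h
  | cons a s ih =>
    rw [Multiset.sum_cons, Multiset.mem_add] at h
    rcases h with h | h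
    · exact ⟨a, Multiset.mem_cons_self _ _, h⟩
    · obtain ⟨B, hB, hxB⟩ := ih h
      exact ⟨B, Multiset.mem_cons_of_mem hB, hxB⟩

lemma my_sum_map_add {α : Type*} (s : Multiset α) (f g : α → ℕ) :
    (s.map (fun a => f a + g a)).sum = (s.map f).sum + (s.map g).sum := by
  induction s using Multiset.induction with
  | empty => simp
  | cons a s ih => simp [ih]; omega

lemma my_sum_map_mul {α : Type*} (s : Multiset α) (c : ℕ) (f : α → ℕ) :
    (s.map (fun a => c * f a)).sum = c * (s.map f).sum := by
  induction s using Multiset.induction with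
  | empty => simp
  | cons a s ih => simp [ih]; ring

lemma my_mul_card_le_sum {s : Multiset ℕ} {m : ℕ} (h : ∀ x ∈ s, m ≤ x) :
    m * Multiset.card s ≤ s.sum := by
  induction s using Multiset.induction with
  | empty => simp
  | cons a s ih =>
    simp only [Multiset.sum_cons, Multiset.card_cons, Nat.mul_succ]
    have := h a (Multiset.mem_cons_self _ _)
    have := ih (fun x hx => h x (Multiset.mem_cons_of_mem hx))
    omega

lemma my_sum_le_mul_card {s : Multiset ℕ} {m : ℕ} (h : ∀ x ∈ s, x ≤ m) :
    s.sum ≤ m * Multiset.card s := by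
  induction s using Multiset.induction with
  | empty => simp
  | cons a s ih =>
    simp only [Multiset.sum_cons, Multiset.card_cons, Nat.mul_succ]
    have := h a (Multiset.mem_cons_self _ _)
    have := ih (fun x hx => h x (Multiset.mem_cons_of_mem hx))
    omega

lemma my_eq_of_ge {s : Multiset ℕ} {m : ℕ} (h : ∀ x ∈ s, m ≤ x)
    (hs : s.sum = m * Multiset.card s) : ∀ x ∈ s, x = m := by
  induction s using Multiset.induction with
  | empty => simp
  | cons a s ih =>
    have h1 := h a (Multiset.mem_cons_self _ _)
    have h2 : ∀ x ∈ s, m ≤ x := fun x hx => h x (Multiset.mem_cons_of_mem hx)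
    have h3 := my_mul_card_le_sum h2
    simp only [Multiset.sum_cons, Multiset.card_cons, Nat.mul_succ] at hs
    have ha : a = m := by omega
    have hsum : s.sum = m * Multiset.card s := by omega
    intro x hx
    rcases Multiset.mem_cons.mp hx with h | h
    · exact h ▸ ha
    · exact ih h2 hsum x h

lemma my_eq_of_le {s : Multiset ℕ} {m : ℕ} (h : ∀ x ∈ s, x ≤ m)
    (hs : s.sum = m * Multiset.card s) : ∀ x ∈ s, x = m := by
  induction s using Multiset.induction with
  | empty => simp
  | cons a s ih =>
    have h1 := h a (Multiset.mem_cons_self _ _)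
    have h2 : ∀ x ∈ s, x ≤ m := fun x hx => h x (Multiset.mem_cons_of_mem hx)
    have h3 := my_sum_le_mul_card h2
    simp only [Multiset.sum_cons, Multiset.card_cons, Nat.mul_succ] at hs
    have ha : a = m := by omega
    have hsum : s.sum = m * Multiset.card s := by omega
    intro x hx
    rcases Multiset.mem_cons.mp hx with h | h
    · exact h ▸ ha
    · exact ih h2 hsum x h

lemma my_prefix_diff {G : Type*} [AddCommGroup G] (L : List G) (i j : ℕ) (hij : i ≤ j)
    (hj : j ≤ L.length) :
    ∃ V : Multiset G, V ≤ ↑L ∧ Multiset.card V = j - i ∧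
      (L.take j).sum = (L.take i).sum + V.sum := by
  refine ⟨↑((L.drop i).take (j - i)), ?_, ?_, ?_⟩
  · exact Multiset.coe_le.mpr (((L.drop i).take_sublist _).trans (L.drop_sublist i)).subperm
  · simp only [Multiset.coe_card, List.length_take, List.length_drop]
    omega
  · have : L.take j = L.take i ++ (L.drop i).take (j - i) := by
      rw [← List.take_add]
      congr 1
      omega
    rw [this, List.sum_append]
    rfl

/-- Davenport bound: a minimal zero-sum sequence has length at most `|G|`. -/
lemma my_dav {G : Type*} [AddCommGroup G] [Fintype G] {B : Multiset G} (hB : IsMinZS B) :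
    Multiset.card B ≤ Fintype.card G := by
  by_contra hcon
  push_neg at hcon
  set n := Fintype.card G with hn
  set L := B.toList with hLdef
  have hL : (↑L : Multiset G) = B := Multiset.coe_toList B
  have hlen : L.length = Multiset.card B := Multiset.length_toList B
  have hcardlt : Fintype.card G < Fintype.card (Fin (n + 1)) := by simp [hn]
  obtain ⟨i, j, hij, hfij⟩ :=
    Fintype.exists_ne_map_eq_of_card_lt (fun i : Fin (n+1) => (L.take (i.val+1)).sum) hcardlt
  rcases hij.lt_or_gt with h | h
  case _ =>
    obtain ⟨V, hVle, hVcard, hVsum⟩ := my_prefix_diff L (i.val+1) (j.val+1)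
      (by omega) (by omega)
    rw [← hfij] at hVsum
    have hV0 : V.sum = 0 := left_eq_add.mp hVsum
    have hVne : V ≠ 0 := by
      intro hv
      rw [hv] at hVcard
      simp at hVcard
      omega
    have := hB.2.2 V (hL ▸ hVle) hVne hV0
    rw [this] at hVcard
    omega
  case _ =>
    obtain ⟨V, hVle, hVcard, hVsum⟩ := my_prefix_diff L (j.val+1) (i.val+1)
      (by omega) (by omega)
    rw [hfij] at hVsum
    have hV0 : V.sum = 0 := left_eq_add.mp hVsum
    have hVne : V ≠ 0 := by
      intro hv
      rw [hv] at hVcard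
      simp at hVcard
      omega
    have := hB.2.2 V (hL ▸ hVle) hVne hV0
    rw [this] at hVcard
    omega

lemma my_psum_image {G : Type*} [AddCommGroup G] [Fintype G] [DecidableEq G]
    {S : Multiset G} (hS : Multiset.card S = Fintype.card G - 1)
    (hn : 1 ≤ Fintype.card G)
    (hz : ∀ V ≤ S, V ≠ 0 → V.sum ≠ 0)
    (L : List G) (hL : (↑L : Multiset G) = S) :
    Finset.image (fun i : Fin (Fintype.card G - 1) => (L.take (i.val+1)).sum) Finset.univ
      = Finset.univ.erase 0 := by
  set n := Fintype.card G with hndef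
  have hlen : L.length = n - 1 := by
    have := congrArg Multiset.card hL
    simpa using this.trans hS
  have hinj : Function.Injective
      (fun i : Fin (n - 1) => (L.take (i.val+1)).sum) := by
    intro i j hij
    by_contra hne
    have hij' : (L.take (i.val+1)).sum = (L.take (j.val+1)).sum := hij
    have hne' : i.val ≠ j.val := fun h => hne (Fin.ext h)
    rcases hne'.lt_or_gt with h | h
    · obtain ⟨V, hVle, hVcard, hVsum⟩ := my_prefix_diff L (i.val+1) (j.val+1)
        (by omega) (by omega)
      rw [← hij'] at hVsum
      exact hz V (hL ▸ hVle) (by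
          intro hv; rw [hv] at hVcard; simp at hVcard; omega)
        (left_eq_add.mp hVsum)
    · obtain ⟨V, hVle, hVcard, hVsum⟩ := my_prefix_diff L (j.val+1) (i.val+1)
        (by omega) (by omega)
      rw [hij'] at hVsum
      exact hz V (hL ▸ hVle) (by
          intro hv; rw [hv] at hVcard; simp at hVcard; omega)
        (left_eq_add.mp hVsum)
  have hsub : Finset.image (fun i : Fin (n - 1) => (L.take (i.val+1)).sum) Finset.univ
      ⊆ Finset.univ.erase 0 := by
    intro x hx
    obtain ⟨i, _, hi⟩ := Finset.mem_image.mp hx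
    refine Finset.mem_erase.mpr ⟨?_, Finset.mem_univ _⟩
    rw [← hi]
    refine hz ↑(L.take (i.val+1)) (hL ▸ Multiset.coe_le.mpr (L.take_sublist _).subperm) ?_
    intro hv
    have : (L.take (i.val+1)).length = 0 := by
      rw [← Multiset.coe_card, hv]; simp
    rw [List.length_take] at this
    omega
  have hcard1 : (Finset.image (fun i : Fin (n - 1) => (L.take (i.val+1)).sum)
      Finset.univ).card = n - 1 := by
    rw [Finset.card_image_of_injective _ hinj]
    simp
  have hcard2 : (Finset.univ.erase (0:G)).card = n - 1 := by
    rw [Finset.card_erase_of_mem (Finset.mem_univ _)]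
    simp [hndef]
  exact Finset.eq_of_subset_of_card_le hsub (by omega)

/-- A zero-sum free multiset of size `|G| - 1` is constant. -/
lemma my_zsf_pair {G : Type*} [AddCommGroup G] [Fintype G] [DecidableEq G]
    {S : Multiset G} (hS : Multiset.card S = Fintype.card G - 1)
    (hn : 4 ≤ Fintype.card G)
    (hz : ∀ V ≤ S, V ≠ 0 → V.sum ≠ 0)
    {a b : G} (hab : (a ::ₘ {b}) ≤ S) : a = b := by
  by_contra hne
  set n := Fintype.card G with hndef
  obtain ⟨T, hT⟩ : ∃ T, (a ::ₘ {b}) + T = S := ⟨S - (a ::ₘ {b}), add_tsub_cancel_of_le hab⟩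
  set LT := T.toList with hLT
  have hLTc : (↑LT : Multiset G) = T := Multiset.coe_toList T
  have hL1 : ((a :: b :: LT : List G) : Multiset G) = S := by
    rw [← hT]
    rw [Multiset.cons_add, Multiset.singleton_add, ← hLTc,
      ← Multiset.cons_coe, ← Multiset.cons_coe]
  have hL2 : ((b :: a :: LT : List G) : Multiset G) = S := by
    rw [← hT]
    rw [Multiset.cons_add, Multiset.singleton_add, ← hLTc, Multiset.cons_swap,
      ← Multiset.cons_coe, ← Multiset.cons_coe]
  have him1 := my_psum_image hS (by omega) hz (a :: b :: LT) hL1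
  have him2 := my_psum_image hS (by omega) hz (b :: a :: LT) hL2
  have ha : a ∈ Finset.image
      (fun i : Fin (n - 1) => ((b :: a :: LT).take (i.val+1)).sum) Finset.univ := by
    rw [him2, ← him1]
    refine Finset.mem_image.mpr ⟨⟨0, by omega⟩, Finset.mem_univ _, ?_⟩
    simp
  obtain ⟨i, _, hi⟩ := Finset.mem_image.mp ha
  rcases Nat.eq_zero_or_pos i.val with h0 | hpos
  · rw [h0] at hi
    simp at hi
    exact hne hi.symm
  · obtain ⟨k, hk⟩ : ∃ k, i.val = k + 1 := ⟨i.val - 1, by omega⟩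
    rw [hk] at hi
    simp only [List.take_succ_cons, List.sum_cons] at hi
    have hbsum : b + (LT.take k).sum = 0 := by
      have h' : (b + (LT.take k).sum) + a = b + (a + (LT.take k).sum) := by abel
      rw [hi] at h'
      have h'' : (b + (LT.take k).sum) + a = 0 + a := by rw [zero_add]; exact h'
      exact add_right_cancel h''
    have hVle : (b ::ₘ ↑(LT.take k)) ≤ S := by
      rw [← hL1]
      have h1 : (b ::ₘ (↑(LT.take k) : Multiset G)) ≤ b ::ₘ ↑LT :=
        Multiset.cons_le_cons _ (Multiset.coe_le.mpr (LT.take_sublist _).subperm)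
      have h2 : (b ::ₘ (↑LT : Multiset G)) ≤ a ::ₘ b ::ₘ ↑LT := Multiset.le_cons_self _ _
      have h3 : ((a :: b :: LT : List G) : Multiset G) = a ::ₘ b ::ₘ ↑LT := rfl
      rw [h3]
      exact h1.trans h2
    exact hz _ hVle (Multiset.cons_ne_zero) (by simpa using hbsum)

/-- Elements of a minimal zero-sum sequence of maximal length `n` have full order. -/
lemma my_min_block {G : Type*} [AddCommGroup G] [Fintype G] [DecidableEq G]
    (n : ℕ) (hn : 4 ≤ n) (hcard : Fintype.card G = n)
    {B : Multiset G} (hB : IsMinZS B) (hBc : Multiset.card B = n) :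
    ∀ x ∈ B, ∀ k : ℕ, 1 ≤ k → k ≤ n - 1 → k • x ≠ 0 := by
  intro x hx
  set S := B.erase x with hSdef
  have hcons : x ::ₘ S = B := Multiset.cons_erase hx
  have hSle : S ≤ B := Multiset.erase_le x B
  have hScard : Multiset.card S = n - 1 := by
    have := congrArg Multiset.card hcons
    simp at this
    omega
  have hz : ∀ V ≤ S, V ≠ 0 → V.sum ≠ 0 := by
    intro V hV hVne hVsum
    have := hB.2.2 V (hV.trans hSle) hVne hVsum
    have hc := congrArg Multiset.card this
    have hVc : Multiset.card V ≤ n - 1 := hScard ▸ Multiset.card_le_card hV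
    omega
  have hS0 : S ≠ 0 := by
    intro h
    rw [h] at hScard
    simp at hScard
    omega
  obtain ⟨g, hg⟩ := Multiset.exists_mem_of_ne_zero hS0
  have hconst : ∀ y ∈ S, y = g := by
    intro y hy
    by_contra hne
    have hpair : (g ::ₘ {y}) ≤ S := by
      rw [Multiset.le_iff_count]
      intro z
      rw [Multiset.count_cons, Multiset.count_singleton]
      by_cases h1 : z = g
      · subst h1
        simp [if_neg (Ne.symm hne)]
        exact Multiset.one_le_count_iff_mem.mpr hg
      · by_cases h2 : z = y
        · subst h2
          simp [if_neg h1]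
          exact Multiset.one_le_count_iff_mem.mpr hy
        · simp [h1, h2]
    exact hne ((my_zsf_pair (hcard ▸ hScard) (hcard ▸ hn) hz hpair).symm)
  have hrep : S = Multiset.replicate (n-1) g :=
    Multiset.eq_replicate.mpr ⟨hScard, hconst⟩
  have hgood_g : ∀ k : ℕ, 1 ≤ k → k ≤ n - 1 → k • g ≠ 0 := by
    intro k hk1 hk2 hkg
    refine hz (Multiset.replicate k g) ?_ ?_ ?_
    · rw [hrep]; exact (Multiset.replicate_le_replicate g).mpr hk2
    · intro h
      have := congrArg Multiset.card h
      simp at this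
      omega
    · rw [Multiset.sum_replicate]; exact hkg
  have hng : n • g = 0 := by rw [← hcard]; exact card_nsmul_eq_zero
  have hsum : x + (n-1) • g = 0 := by
    have := hB.2.1
    rw [← hcons, Multiset.sum_cons, hrep, Multiset.sum_replicate] at this
    exact this
  have hxg : x = g := by
    have h2 : g + (n-1) • g = 0 := by
      rw [← succ_nsmul']
      have h3 : n - 1 + 1 = n := by omega
      rw [h3]; exact hng
    exact add_right_cancel (hsum.trans h2.symm)
  rw [hxg]
  exact hgood_g

/-- Parity homomorphism on a cyclic group of even order. -/
lemma my_parity_hom {G : Type*} [AddCommGroup G] [Fintype G] (n : ℕ) (hn : 4 ≤ n)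
    (heven : Even n) (hcyc : IsAddCyclic G) (hcard : Fintype.card G = n) :
    ∃ φ : G →+ ZMod 2, ∀ x : G, φ x = 0 → (n / 2) • x = 0 := by
  haveI : NeZero n := ⟨by omega⟩
  obtain ⟨g0, hg0⟩ := hcyc.exists_generator
  have h2n : (2 : ℕ) ∣ n := heven.two_dvd
  have hker : (zmultiplesHom G g0) (n : ℤ) = 0 := by
    simp only [zmultiplesHom_apply, natCast_zsmul]
    rw [← hcard]
    exact card_nsmul_eq_zero
  set ψ : ZMod n →+ G := ZMod.lift n ⟨zmultiplesHom G g0, hker⟩ with hψ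
  have hψ_int : ∀ k : ℤ, ψ ((k : ℤ) : ZMod n) = k • g0 := by
    intro k
    rw [hψ, ZMod.lift_coe]
    rfl
  have hsurj : Function.Surjective ψ := by
    intro x
    obtain ⟨k, hk⟩ := AddSubgroup.mem_zmultiples_iff.mp (hg0 x)
    exact ⟨((k : ℤ) : ZMod n), by rw [hψ_int]; exact hk⟩
  have hbij : Function.Bijective ψ := by
    rw [Fintype.bijective_iff_surjective_and_card]
    refine ⟨hsurj, ?_⟩
    rw [ZMod.card, hcard]
  set e : ZMod n ≃+ G := AddEquiv.ofBijective ψ hbij with he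
  refine ⟨(ZMod.castHom h2n (ZMod 2)).toAddMonoidHom.comp e.symm.toAddMonoidHom, ?_⟩
  intro x hx
  simp only [AddMonoidHom.comp_apply, AddEquiv.coe_toAddMonoidHom,
    RingHom.toAddMonoidHom_eq_coe, AddMonoidHom.coe_coe] at hx
  set z : ZMod n := e.symm x with hz
  have hzx : e z = x := by rw [hz]; exact e.apply_symm_apply x
  have hval : z = ((z.val : ℕ) : ZMod n) := by rw [ZMod.natCast_val, ZMod.cast_id]
  have hcast : ((z.val : ℕ) : ZMod 2) = 0 := by
    have h' := hx
    rw [hval] at h'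
    rwa [map_natCast] at h'
  obtain ⟨w, hw⟩ := (ZMod.natCast_eq_zero_iff _ 2).mp hcast
  have hzform : z = ((2 * w : ℕ) : ZMod n) := by rw [hval, hw]
  have hz0 : (n / 2) • z = 0 := by
    rw [hzform, nsmul_eq_mul, ← Nat.cast_mul,
      (show n / 2 * (2 * w) = n * w by rw [← mul_assoc, Nat.div_mul_cancel h2n]),
      Nat.cast_mul, ZMod.natCast_self, zero_mul]
  calc (n / 2) • x = (n / 2) • (e z) := by rw [hzx]
    _ = e ((n / 2) • z) := (map_nsmul e _ _).symm
    _ = e 0 := by rw [hz0]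
    _ = 0 := map_zero e

lemma my_one_four {G : Type*} (F : Multiset (Multiset G))
    (h2 : ∀ B ∈ F, 2 ≤ Multiset.card B ∧ Even (Multiset.card B))
    (hsum : (F.map Multiset.card).sum = 2 * Multiset.card F + 2) :
    ∃ B4 F2, F = B4 ::ₘ F2 ∧ Multiset.card B4 = 4 ∧ ∀ B ∈ F2, Multiset.card B = 2 := by
  induction F using Multiset.induction with
  | empty => simp at hsum
  | cons B s ih =>
    have hB := h2 B (Multiset.mem_cons_self _ _)
    have hs2 : ∀ B' ∈ s, 2 ≤ Multiset.card B' ∧ Even (Multiset.card B') :=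
      fun B' hB' => h2 B' (Multiset.mem_cons_of_mem hB')
    have hslow : 2 * Multiset.card s ≤ (s.map Multiset.card).sum := by
      have := my_mul_card_le_sum (s := s.map Multiset.card) (m := 2) (fun x hx => by
        obtain ⟨B', hB', rfl⟩ := Multiset.mem_map.mp hx
        exact (hs2 B' hB').1)
      simpa using this
    simp only [Multiset.map_cons, Multiset.sum_cons, Multiset.card_cons] at hsum
    obtain ⟨c, hc⟩ := hB.2
    have hBcase : Multiset.card B = 2 ∨ Multiset.card B = 4 := by omega
    rcases hBcase with h4 | h4
    · have hrec : (s.map Multiset.card).sum = 2 * Multiset.card s + 2 := by omega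
      obtain ⟨B4, F2, hF2, hB4, hall⟩ := ih hs2 hrec
      refine ⟨B4, B ::ₘ F2, ?_, hB4, ?_⟩
      · rw [hF2, Multiset.cons_swap]
      · intro B' hB'
        rcases Multiset.mem_cons.mp hB' with h | h
        · rw [h]; exact h4
        · exact hall B' h
    · have hrest : (s.map Multiset.card).sum = 2 * Multiset.card (s.map Multiset.card) := by
        simp only [Multiset.card_map]
        omega
      refine ⟨B, s, rfl, h4, ?_⟩
      intro B' hB'
      exact my_eq_of_ge (fun x hx => by
        obtain ⟨B'', hB'', rfl⟩ := Multiset.mem_map.mp hx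
        exact (hs2 B'' hB'').1) hrest _ (Multiset.mem_map_of_mem _ hB')

lemma my_pair_count {G : Type*} [AddCommGroup G] [DecidableEq G] {B : Multiset G}
    (hB : IsMinZS B) (hBc : Multiset.card B = 2) (x : G) :
    B.count x = B.count (-x) := by
  obtain ⟨y, z, hyz⟩ := Multiset.card_eq_two.mp hBc
  have hz : z = -y := by
    have := hB.2.1
    rw [hyz] at this
    simp at this
    exact eq_neg_of_add_eq_zero_right this
  subst hz
  rw [hyz]
  have hcount : ∀ u : G, Multiset.count u ({y, -y} : Multiset G)
      = (if u = y then 1 else 0) + (if u = -y then 1 else 0) := by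
    intro u
    rw [show ({y, -y} : Multiset G) = y ::ₘ {(-y)} from rfl, Multiset.count_cons,
      Multiset.count_singleton, add_comm]
  rw [hcount, hcount]
  simp only [show (-x = -y) ↔ (x = y) from neg_inj,
    show (-x = y) ↔ (x = -y) from neg_eq_iff_eq_neg, add_comm]

lemma my_block_even {G : Type*} [AddCommGroup G]
    (φ : G →+ ZMod 2) {B : Multiset G}
    (hφ : ∀ x ∈ B, φ x = 1) (hBsum : B.sum = 0) :
    Even (Multiset.card B) := by
  have h1 : (B.map φ).sum = 0 := by
    rw [← AddMonoidHom.map_multiset_sum, hBsum, map_zero]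
  have h2 : B.map φ = Multiset.replicate (Multiset.card B) 1 :=
    Multiset.eq_replicate.mpr ⟨Multiset.card_map _ _, by
      intro y hy
      obtain ⟨x, hx, rfl⟩ := Multiset.mem_map.mp hy
      exact hφ x hx⟩
  rw [h2, Multiset.sum_replicate, nsmul_eq_mul, mul_one] at h1
  exact (even_iff_two_dvd).mpr ((ZMod.natCast_eq_zero_iff _ 2).mp h1)

end Aux

theorem stmt6 {G : Type*} [AddCommGroup G] [Fintype G] (n : ℕ) (hn : 4 ≤ n)
    (heven : Even n) (hcyc : IsAddCyclic G) (hcard : Fintype.card G = n) :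
    ¬ ∃ A : Multiset G, A.sum = 0 ∧ rhoSet (LSet A) = (n : ℚ) / 2 ∧
      sSup (LSet A) - 1 ∈ LSet A := by
  classical
  rintro ⟨A, hA0, hrho, hmem⟩
  set M := sSup (LSet A) with hMdef
  set l := sInf (LSet A) with hldef
  rw [rhoSet] at hrho
  -- l ≥ 1
  have hl1 : 1 ≤ l := by
    by_contra h
    have hl0 : l = 0 := by omega
    rw [← hMdef, ← hldef, hl0] at hrho
    norm_num at hrho
    have : (n : ℚ) = 0 := by linarith [hrho]
    have : n = 0 := by exact_mod_cast this
    omega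
  -- 2M = n l
  have hMl : 2 * M = n * l := by
    rw [← hMdef, ← hldef] at hrho
    have hlq : ((l : ℕ) : ℚ) ≠ 0 := by
      simp only [ne_eq, Nat.cast_eq_zero]
      omega
    field_simp at hrho
    have : (M : ℚ) * 2 = (n : ℚ) * l := by linarith [hrho]
    exact_mod_cast (by linarith [this] : (2 : ℚ) * M = (n : ℚ) * l)
  have hM2 : 2 ≤ M := by
    have : 4 * 1 ≤ n * l := Nat.mul_le_mul hn hl1
    omega
  -- boundedness and membership of sSup/sInf
  have hbdd : BddAbove (LSet A) := by
    refine ⟨Multiset.card A, ?_⟩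
    rintro k ⟨F, hFc, hFmin, hFsum⟩
    have h1 : 1 * Multiset.card (F.map Multiset.card) ≤ (F.map Multiset.card).sum := by
      refine my_mul_card_le_sum ?_
      intro x hx
      obtain ⟨B, hB, rfl⟩ := Multiset.mem_map.mp hx
      exact Multiset.card_pos.mpr (hFmin B hB).1
    rw [one_mul, Multiset.card_map, ← my_card_sum, hFsum, hFc] at h1
    exact h1
  have hne : (LSet A).Nonempty := ⟨M - 1, hmem⟩
  have hMmem : M ∈ LSet A := Nat.sSup_mem hne hbdd
  have hlmem : l ∈ LSet A := Nat.sInf_mem hne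
  -- per-block inequalities
  have hblock : ∀ B : Multiset G, IsMinZS B →
      (2 ≤ Multiset.card B + B.count 0) ∧
      (Multiset.card B + (n-1) * B.count 0 ≤ n) := by
    intro B hB
    by_cases h0 : (0:G) ∈ B
    · have hBeq : ({0} : Multiset G) = B :=
        hB.2.2 {0} (Multiset.singleton_le.mpr h0) (by simp) (by simp)
      rw [← hBeq]
      simp
      omega
    · have hcnt : B.count 0 = 0 := Multiset.count_eq_zero.mpr h0
      have hc2 : 2 ≤ Multiset.card B := by
        by_contra h
        push_neg at h
        interval_cases hc : Multiset.card B
        · exact hB.1 (Multiset.card_eq_zero.mp hc)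
        · obtain ⟨x, hx⟩ := Multiset.card_eq_one.mp hc
          have : x = 0 := by
            have := hB.2.1
            rw [hx] at this
            simpa using this
          exact h0 (by rw [hx, this]; simp)
      have hd := my_dav hB
      rw [hcard] at hd
      refine ⟨by omega, ?_⟩
      rw [hcnt, Nat.mul_zero, Nat.add_zero]
      omega
  -- global inequalities per factorization
  have hFineq : ∀ F : Multiset (Multiset G), (∀ B ∈ F, IsMinZS B) → F.sum = A →
      2 * Multiset.card F ≤ Multiset.card A + A.count 0 ∧
      Multiset.card A + (n-1) * A.count 0 ≤ n * Multiset.card F := by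
    intro F hFmin hFsum
    have hsplit1 : (F.map (fun B => Multiset.card B + B.count 0)).sum
        = Multiset.card A + A.count 0 := by
      rw [my_sum_map_add, ← my_card_sum, ← my_count_sum, hFsum]
    have hsplit2 : (F.map (fun B => Multiset.card B + (n-1) * B.count 0)).sum
        = Multiset.card A + (n-1) * A.count 0 := by
      rw [my_sum_map_add, ← my_card_sum]
      have : (F.map (fun B => (n-1) * B.count 0)).sum
          = (n-1) * (F.map (Multiset.count 0)).sum := my_sum_map_mul F (n-1) _
      rw [this, ← my_count_sum, hFsum]
    constructor
    · have h1 : 2 * Multiset.card (F.map (fun B => Multiset.card B + B.count 0))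
          ≤ (F.map (fun B => Multiset.card B + B.count 0)).sum := by
        refine my_mul_card_le_sum ?_
        intro x hx
        obtain ⟨B, hB, rfl⟩ := Multiset.mem_map.mp hx
        exact (hblock B (hFmin B hB)).1
      rwa [Multiset.card_map, hsplit1] at h1
    · have h1 : (F.map (fun B => Multiset.card B + (n-1) * B.count 0)).sum
          ≤ n * Multiset.card (F.map (fun B => Multiset.card B + (n-1) * B.count 0)) := by
        refine my_sum_le_mul_card ?_
        intro x hx
        obtain ⟨B, hB, rfl⟩ := Multiset.mem_map.mp hx
        exact (hblock B (hFmin B hB)).2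
      rwa [Multiset.card_map, hsplit2] at h1
  obtain ⟨Fmax, hFmaxc, hFmaxmin, hFmaxsum⟩ := hMmem
  obtain ⟨Fmin, hFminc, hFminmin, hFminsum⟩ := hlmem
  have hIneq1 := hFineq Fmax hFmaxmin hFmaxsum
  have hIneq2 := hFineq Fmin hFminmin hFminsum
  rw [hFmaxc] at hIneq1
  rw [hFminc] at hIneq2
  -- derive t = 0 and |A| = 2M
  set cA := Multiset.card A with hcA
  set t := A.count 0 with ht
  have ht0 : t = 0 ∧ cA = 2 * M := by
    have h3t : 3 * t ≤ (n-1) * t := Nat.mul_le_mul_right t (by omega)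
    have hu1 : 2 * M ≤ cA + t := hIneq1.1
    have hu2 : cA + (n-1) * t ≤ n * l := hIneq2.2
    have hnl : n * l = 2 * M := hMl.symm
    -- also the reverse bounds
    have hu3 : 2 * l ≤ cA + t := hIneq2.1
    have hu4 : cA + (n-1) * t ≤ 2 * M := by omega
    constructor
    · omega
    · omega
  obtain ⟨htzero, hcA2M⟩ := ht0
  -- max factorization: all blocks are pairs
  have hmax2 : ∀ B ∈ Fmax, Multiset.card B = 2 := by
    have hge : ∀ x ∈ Fmax.map Multiset.card, 2 ≤ x := by
      intro x hx
      obtain ⟨B, hB, rfl⟩ := Multiset.mem_map.mp hx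
      have hcnt : B.count 0 = 0 := by
        have hle : B ≤ A := hFmaxsum ▸ my_mem_le_sum hB
        have := Multiset.count_le_of_le 0 hle
        omega
      have := (hblock B (hFmaxmin B hB)).1
      omega
    have hsum : (Fmax.map Multiset.card).sum = 2 * Multiset.card (Fmax.map Multiset.card) := by
      rw [← my_card_sum, hFmaxsum, Multiset.card_map, hFmaxc, ← hcA, hcA2M]
    intro B hB
    exact my_eq_of_ge hge hsum _ (Multiset.mem_map_of_mem _ hB)
  -- count symmetry of A
  have hsym : ∀ x : G, A.count x = A.count (-x) := by
    intro x
    rw [← hFmaxsum, my_count_sum, my_count_sum]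
    congr 1
    refine Multiset.map_congr rfl ?_
    intro B hB
    exact my_pair_count (hFmaxmin B hB) (hmax2 B hB) x
  -- min factorization: all blocks have card n
  have hminn : ∀ B ∈ Fmin, Multiset.card B = n := by
    have hle : ∀ x ∈ Fmin.map Multiset.card, x ≤ n := by
      intro x hx
      obtain ⟨B, hB, rfl⟩ := Multiset.mem_map.mp hx
      exact hcard ▸ my_dav (hFminmin B hB)
    have hsum : (Fmin.map Multiset.card).sum = n * Multiset.card (Fmin.map Multiset.card) := by
      rw [← my_card_sum, hFminsum, Multiset.card_map, hFminc, ← hcA, hcA2M, hMl]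
    intro B hB
    exact my_eq_of_le hle hsum _ (Multiset.mem_map_of_mem _ hB)
  -- all elements of A are good
  have hgood : ∀ x ∈ A, ∀ k : ℕ, 1 ≤ k → k ≤ n - 1 → k • x ≠ 0 := by
    intro x hx
    obtain ⟨B, hB, hxB⟩ := my_mem_sum (hFminsum ▸ hx : x ∈ Fmin.sum)
    exact my_min_block n hn hcard (hFminmin B hB) (hminn B hB) x hxB
  -- parity homomorphism
  obtain ⟨φ, hφ⟩ := my_parity_hom n hn heven hcyc hcard
  have hφ1 : ∀ x ∈ A, φ x = 1 := by
    intro x hx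
    have h01 : φ x = 0 ∨ φ x = 1 := by
      have : ∀ u : ZMod 2, u = 0 ∨ u = 1 := by decide
      exact this _
    rcases h01 with h | h
    · exfalso
      exact hgood x hx (n/2) (by omega) (by omega) (hφ x h)
    · exact h
  -- the (M-1)-factorization
  obtain ⟨F', hF'c, hF'min, hF'sum⟩ := hmem
  have hblockeven : ∀ B ∈ F', 2 ≤ Multiset.card B ∧ Even (Multiset.card B) := by
    intro B hB
    have hBA : B ≤ A := hF'sum ▸ my_mem_le_sum hB
    have heB : Even (Multiset.card B) := by
      refine my_block_even φ ?_ (hF'min B hB).2.1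
      intro x hx
      exact hφ1 x (Multiset.mem_of_le hBA hx)
    have h1 : 1 ≤ Multiset.card B := Multiset.card_pos.mpr (hF'min B hB).1
    exact ⟨by obtain ⟨c, hc⟩ := heB; omega, heB⟩
  have hsum' : (F'.map Multiset.card).sum = 2 * Multiset.card F' + 2 := by
    rw [← my_card_sum, hF'sum, ← hcA, hcA2M, hF'c]
    omega
  obtain ⟨B4, F2, hF'eq, hB4c, hF2c⟩ := my_one_four F' hblockeven hsum'
  have hB4mem : B4 ∈ F' := hF'eq ▸ Multiset.mem_cons_self _ _
  have hB4min : IsMinZS B4 := hF'min B4 hB4mem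
  have hAsplit : A = B4 + F2.sum := by
    rw [← hF'sum, hF'eq, Multiset.sum_cons]
  have hsym2 : ∀ x : G, F2.sum.count x = F2.sum.count (-x) := by
    intro x
    rw [my_count_sum, my_count_sum]
    congr 1
    refine Multiset.map_congr rfl ?_
    intro B hB
    exact my_pair_count (hF'min B (hF'eq ▸ Multiset.mem_cons_of_mem hB)) (hF2c B hB) x
  have hB4sym : ∀ x : G, B4.count x = B4.count (-x) := by
    intro x
    have h1 := hsym x
    have h2 := hsym2 x
    rw [hAsplit, Multiset.count_add, Multiset.count_add] at h1
    omega
  -- pick an element of B4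
  have hB4ne : B4 ≠ 0 := hB4min.1
  obtain ⟨x, hx⟩ := Multiset.exists_mem_of_ne_zero hB4ne
  have hxA : x ∈ A := by
    rw [hAsplit]
    exact Multiset.mem_add.mpr (Or.inl hx)
  have h2x : (2:ℕ) • x ≠ 0 := hgood x hxA 2 (by omega) (by omega)
  have hxnx : x ≠ -x := by
    intro h
    apply h2x
    rw [two_nsmul]
    nth_rewrite 2 [h]
    exact add_neg_cancel x
  have hnx : -x ∈ B4 := by
    rw [← Multiset.count_pos, ← hB4sym]
    exact Multiset.count_pos.mpr hx
  -- the pair {x, -x} sits inside B4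
  have hVle : (x ::ₘ {(-x)}) ≤ B4 := by
    rw [Multiset.le_iff_count]
    intro z
    rw [Multiset.count_cons, Multiset.count_singleton]
    by_cases h1 : z = x
    · subst h1
      rw [if_neg hxnx, if_pos rfl]
      simpa using Multiset.one_le_count_iff_mem.mpr hx
    · by_cases h2 : z = -x
      · subst h2
        rw [if_pos rfl, if_neg (fun h => hxnx h.symm)]
        simpa using Multiset.one_le_count_iff_mem.mpr hnx
      · rw [if_neg h2, if_neg h1]
        simp
  have hVeq := hB4min.2.2 (x ::ₘ {(-x)}) hVle (Multiset.cons_ne_zero)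
    (by simp)
  have hcontra := congrArg Multiset.card hVeq
  simp [hB4c] at hcontra
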